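/- arXiv:2010.12354 — 5 statements merged into one kernel-verified Lean document; each statement's English description precedes it below -/
import Mathlib

section
/- Let N ≥ 1, let ρ₁, …, ρ_N be n×n density matrices (positive semidefinite with trace 1), and let π₁, …, π_N be nonnegative reals summing to 1. Then there exists a POVM {Π₁, …, Π_N} on ℂⁿ such that the error probability satisfies Σ_{i ≠ j} π_i · Tr(Π_j ρ_i) ≤ Σ_{i ≠ j} √(π_i π_j) · F(ρ_i, ρ_j). -/
open Matrix
open scoped ComplexOrder

/-- The positive semidefinite square root of a matrix (junk value 0 if not PSD). -/
noncomputable def matSqrt {ι : Type*} [Fintype ι] [DecidableEq ι]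
    (A : Matrix ι ι ℂ) : Matrix ι ι ℂ :=
  open scoped Classical in
  if h : A.PosSemidef then
    h.1.eigenvectorUnitary.1 * diagonal ((↑) ∘ (√·) ∘ h.1.eigenvalues) *
      (star h.1.eigenvectorUnitary : Matrix ι ι ℂ) else 0

/-- The fidelity F(ρ, σ) = Tr √(√ρ · σ · √ρ) between matrices. -/
noncomputable def mFid {ι : Type*} [Fintype ι] [DecidableEq ι]
    (ρ σ : Matrix ι ι ℂ) : ℝ :=
  ((matSqrt (matSqrt ρ * σ * matSqrt ρ)).trace).re

namespace PGMaux
variable {ι : Type*} [Fintype ι] [DecidableEq ι]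

noncomputable def _root_.Matrix.PosSemidef.sqrt {A : Matrix ι ι ℂ} (h : A.PosSemidef) :
    Matrix ι ι ℂ :=
  h.1.eigenvectorUnitary.1 * diagonal ((↑) ∘ (√·) ∘ h.1.eigenvalues) *
    (star h.1.eigenvectorUnitary : Matrix ι ι ℂ)

lemma spec {A : Matrix ι ι ℂ} (hA : A.IsHermitian) :
    A = (hA.eigenvectorUnitary : Matrix ι ι ℂ) * diagonal (RCLike.ofReal ∘ hA.eigenvalues)
      * star (hA.eigenvectorUnitary : Matrix ι ι ℂ) := by
  conv_lhs => rw [hA.spectral_theorem]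
  rw [Unitary.conjStarAlgAut_apply]

lemma _root_.Matrix.PosSemidef.posSemidef_sqrt {A : Matrix ι ι ℂ} (h : A.PosSemidef) :
    h.sqrt.PosSemidef := by
  have hd : (diagonal (((↑) ∘ (√·) ∘ h.1.eigenvalues) : ι → ℂ)).PosSemidef := by
    refine Matrix.PosSemidef.diagonal fun k => ?_
    show (0:ℂ) ≤ ((√(h.1.eigenvalues k) : ℝ) : ℂ)
    exact_mod_cast Complex.zero_le_real.mpr (Real.sqrt_nonneg _)
  have := hd.mul_mul_conjTranspose_same (h.1.eigenvectorUnitary : Matrix ι ι ℂ)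
  rwa [← Matrix.star_eq_conjTranspose] at this

lemma _root_.Matrix.PosSemidef.sqrt_mul_self {A : Matrix ι ι ℂ} (h : A.PosSemidef) :
    h.sqrt * h.sqrt = A := by
  unfold Matrix.PosSemidef.sqrt
  set U : Matrix ι ι ℂ := (h.1.eigenvectorUnitary : Matrix ι ι ℂ)
  have hU : star U * U = 1 := Matrix.mem_unitaryGroup_iff'.mp h.1.eigenvectorUnitary.2
  calc _ = U * (diagonal (((↑) ∘ (√·) ∘ h.1.eigenvalues) : ι → ℂ) * (star U * U) *
        diagonal (((↑) ∘ (√·) ∘ h.1.eigenvalues) : ι → ℂ)) * star U := by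
        simp only [Matrix.mul_assoc]
    _ = U * diagonal (RCLike.ofReal ∘ h.1.eigenvalues) * star U := by
        rw [hU, Matrix.mul_one, diagonal_mul_diagonal]
        congr 2; congr 1; funext k
        simp only [Function.comp_apply]
        rw [← Complex.ofReal_mul, Real.mul_self_sqrt (h.eigenvalues_nonneg k)]
        rfl
    _ = A := (spec h.1).symm

/-- diagonal entries of a PSD matrix are nonneg. -/
lemma psd_diag_nonneg {C : Matrix ι ι ℂ} (hC : C.PosSemidef) (k : ι) : 0 ≤ (C k k).re := by
  have h := hC.re_dotProduct_nonneg (Pi.single k 1)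
  simpa [dotProduct, mulVec, Pi.single_apply, Finset.sum_ite_eq, mul_comm] using h

lemma psd_trace_re_nonneg {C : Matrix ι ι ℂ} (hC : C.PosSemidef) : 0 ≤ C.trace.re := by
  rw [Matrix.trace]
  have : (∑ k, C.diag k).re = ∑ k, (C k k).re := by
    simp [Matrix.diag, Complex.re_sum]
  rw [this]
  exact Finset.sum_nonneg fun k _ => psd_diag_nonneg hC k

/-- real part of trace of a product of PSD matrices is nonneg. -/
lemma trace_re_mul_psd_nonneg {A B : Matrix ι ι ℂ} (hA : A.PosSemidef) (hB : B.PosSemidef) :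
    0 ≤ ((A * B).trace).re := by
  have h1 : (A * B).trace = (hB.sqrt * A * hB.sqrt).trace := by
    conv_lhs => rw [← hB.sqrt_mul_self]
    rw [← Matrix.mul_assoc, Matrix.trace_mul_cycle]
  rw [h1]
  have hherm : hB.sqrt.conjTranspose = hB.sqrt := hB.posSemidef_sqrt.1
  have : (hB.sqrt * A * hB.sqrt).PosSemidef := by
    have := hA.mul_mul_conjTranspose_same hB.sqrt
    rwa [hherm] at this
  exact psd_trace_re_nonneg this

omit [DecidableEq ι] in
/-- smul of PSD by nonneg real. -/
lemma psd_smul {A : Matrix ι ι ℂ} (hA : A.PosSemidef) {r : ℝ} (hr : 0 ≤ r) :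
    ((r : ℂ) • A).PosSemidef := by
  refine Matrix.PosSemidef.of_dotProduct_mulVec_nonneg ?_ ?_
  · unfold Matrix.IsHermitian
    rw [Matrix.conjTranspose_smul, hA.1.eq]
    congr 1
    simp
  · intro x
    rw [Matrix.smul_mulVec, dotProduct_smul]
    have h := hA.dotProduct_mulVec_nonneg x
    rw [smul_eq_mul]
    have hr' : (0:ℂ) ≤ (r:ℂ) := by exact_mod_cast Complex.zero_le_real.mpr hr
    exact mul_nonneg hr' h

omit [DecidableEq ι] in
lemma psd_sum {κ : Type*} (s : Finset κ) (f : κ → Matrix ι ι ℂ)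
    (hf : ∀ k ∈ s, (f k).PosSemidef) : (∑ k ∈ s, f k).PosSemidef := by
  classical
  induction s using Finset.induction_on with
  | empty => simpa using Matrix.PosSemidef.zero
  | @insert a s' hnot ih =>
    rw [Finset.sum_insert hnot]
    exact (hf a (Finset.mem_insert_self a s')).add
      (ih fun k hk => hf k (Finset.mem_insert_of_mem hk))

omit [DecidableEq ι] in
/-- entrywise AM-GM bound for Re trace(Wᴴ V). -/
lemma trace_re_conj_le (W V : Matrix ι ι ℂ) :
    ((Wᴴ * V).trace).re ≤ (((Wᴴ * W).trace).re + ((Vᴴ * V).trace).re) / 2 := by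
  have expand : ∀ (X Y : Matrix ι ι ℂ), ((Xᴴ * Y).trace).re
      = ∑ l, ∑ k, ((starRingEnd ℂ) (X k l) * Y k l).re := by
    intro X Y
    rw [Matrix.trace]
    rw [show (∑ l, (Xᴴ * Y).diag l).re = ∑ l, ((Xᴴ * Y) l l).re by simp [Matrix.diag, Complex.re_sum]]
    refine Finset.sum_congr rfl fun l _ => ?_
    rw [Matrix.mul_apply, Complex.re_sum]
    rfl
  rw [expand W V, expand W W, expand V V]
  rw [div_eq_inv_mul, ← Finset.sum_add_distrib, Finset.mul_sum]
  refine Finset.sum_le_sum fun l _ => ?_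
  rw [← Finset.sum_add_distrib, Finset.mul_sum]
  refine Finset.sum_le_sum fun k _ => ?_
  have h1 : ((starRingEnd ℂ) (W k l) * V k l).re ≤ ‖W k l‖ * ‖V k l‖ := by
    calc ((starRingEnd ℂ) (W k l) * V k l).re ≤ ‖(starRingEnd ℂ) (W k l) * V k l‖ :=
          Complex.re_le_norm _
      _ = ‖W k l‖ * ‖V k l‖ := by rw [norm_mul, RCLike.norm_conj]
  have h2 : ((starRingEnd ℂ) (W k l) * W k l).re = ‖W k l‖ ^ 2 := by
    rw [mul_comm, Complex.mul_conj, ← Complex.sq_norm]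
    norm_cast
  have h3 : ((starRingEnd ℂ) (V k l) * V k l).re = ‖V k l‖ ^ 2 := by
    rw [mul_comm, Complex.mul_conj, ← Complex.sq_norm]
    norm_cast
  rw [h2, h3]
  nlinarith [sq_nonneg (‖W k l‖ - ‖V k l‖), norm_nonneg (W k l), norm_nonneg (V k l)]


/-- apply a real function to the "eigenvalues" in a fixed unitary frame. -/
noncomputable def fc (U : Matrix ι ι ℂ) (t : ι → ℝ) (f : ℝ → ℝ) : Matrix ι ι ℂ :=
  U * diagonal (fun k => (f (t k) : ℂ)) * star U

lemma trace_diagonal_mul (d : ι → ℂ) (Z : Matrix ι ι ℂ) :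
    (diagonal d * Z).trace = ∑ k, d k * Z k k := by
  simp [Matrix.trace, Matrix.diag, Matrix.diagonal_mul]

variable {U : Matrix ι ι ℂ} {t : ι → ℝ}

lemma fc_mul (hU : star U * U = 1) (f g : ℝ → ℝ) :
    fc U t f * fc U t g = fc U t (fun x => f x * g x) := by
  unfold fc
  have : U * diagonal (fun k => (f (t k) : ℂ)) * star U * (U * diagonal (fun k => (g (t k) : ℂ)) * star U)
      = U * (diagonal (fun k => (f (t k) : ℂ)) * (star U * U) * diagonal (fun k => (g (t k) : ℂ))) * star U := by
    simp only [Matrix.mul_assoc]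
  rw [this, hU, Matrix.mul_one, diagonal_mul_diagonal]
  push_cast
  rfl

lemma fc_herm (f : ℝ → ℝ) : (fc U t f).IsHermitian := by
  unfold fc
  unfold Matrix.IsHermitian
  rw [Matrix.conjTranspose_mul, Matrix.conjTranspose_mul, Matrix.diagonal_conjTranspose]
  rw [Matrix.star_eq_conjTranspose U]
  rw [Matrix.conjTranspose_conjTranspose]
  rw [Matrix.mul_assoc]
  congr 1
  have : star (fun k => (f (t k) : ℂ)) = fun k => (f (t k) : ℂ) := by
    funext k; simp [Complex.conj_ofReal]
  rw [this]

lemma fc_psd (f : ℝ → ℝ) (hf : ∀ k, 0 ≤ f (t k)) : (fc U t f).PosSemidef := by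
  unfold fc
  have hd : (diagonal (fun k => (f (t k) : ℂ))).PosSemidef := by
    refine Matrix.PosSemidef.diagonal fun k => ?_
    show (0:ℂ) ≤ ((f (t k) : ℝ) : ℂ)
    exact_mod_cast Complex.zero_le_real.mpr (hf k)
  have := hd.mul_mul_conjTranspose_same U
  rwa [← Matrix.star_eq_conjTranspose] at this

lemma fc_one (hU : U * star U = 1) : fc U t (fun _ => 1) = 1 := by
  unfold fc
  have : diagonal (fun k : ι => (1 : ℂ)) = 1 := by
    simpa using Matrix.diagonal_one
  rw [show (fun k => ((1:ℝ) : ℂ)) = (fun _ : ι => (1:ℂ)) by norm_num, this, Matrix.mul_one, hU]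

lemma fc_sub (f g : ℝ → ℝ) : fc U t f - fc U t g = fc U t (fun x => f x - g x) := by
  unfold fc
  rw [← Matrix.sub_mul, ← Matrix.mul_sub, Matrix.diagonal_sub]
  push_cast
  rfl

lemma fc_congr {f g : ℝ → ℝ} (h : ∀ k, f (t k) = g (t k)) : fc U t f = fc U t g := by
  unfold fc
  have : (fun k => (f (t k) : ℂ)) = fun k => (g (t k) : ℂ) := funext fun k => by rw [h k]
  rw [this]

lemma trace_fc_mul (hU : star U * U = 1) (f : ℝ → ℝ) (M : Matrix ι ι ℂ) :
    (fc U t f * M).trace = ∑ k, (f (t k) : ℂ) * (star U * M * U) k k := by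
  have e1 : fc U t f * M = U * (diagonal (fun k => (f (t k) : ℂ)) * (star U * M)) := by
    unfold fc; simp only [Matrix.mul_assoc]
  rw [e1, Matrix.trace_mul_comm]
  have e2 : diagonal (fun k => (f (t k) : ℂ)) * (star U * M) * U
      = diagonal (fun k => (f (t k) : ℂ)) * (star U * M * U) := by
    simp only [Matrix.mul_assoc]
  rw [e2, trace_diagonal_mul]

lemma trace_fc_quad (hU : star U * U = 1) (f g : ℝ → ℝ) (M : Matrix ι ι ℂ) :
    (fc U t f * M * (fc U t g) * M).trace
      = ∑ k, ∑ l, ((f (t k) * g (t l) : ℝ) : ℂ)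
          * ((star U * M * U) k l * (star U * M * U) l k) := by
  have e1 : fc U t f * M * (fc U t g) * M
      = U * (diagonal (fun k => (f (t k) : ℂ)) * ((star U * M * U)
          * (diagonal (fun k => (g (t k) : ℂ)) * (star U * M)))) := by
    unfold fc; simp only [Matrix.mul_assoc]
  rw [e1, Matrix.trace_mul_comm]
  have e2 : diagonal (fun k => (f (t k) : ℂ)) * ((star U * M * U)
          * (diagonal (fun k => (g (t k) : ℂ)) * (star U * M))) * U
      = diagonal (fun k => (f (t k) : ℂ)) * ((star U * M * U)
          * (diagonal (fun k => (g (t k) : ℂ)) * (star U * M * U))) := by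
    simp only [Matrix.mul_assoc]
  rw [e2, trace_diagonal_mul]
  refine Finset.sum_congr rfl fun k _ => ?_
  rw [Matrix.mul_apply, Finset.mul_sum]
  refine Finset.sum_congr rfl fun l _ => ?_
  rw [Matrix.diagonal_mul]
  push_cast
  ring


noncomputable def rfun : ℝ → ℝ := fun x => if 0 < x then (Real.sqrt x)⁻¹ else 0
noncomputable def qfun : ℝ → ℝ := fun x => if 0 < x then 1 else 0

variable {T : Matrix ι ι ℂ}

noncomputable def eU (hT : T.PosSemidef) : Matrix ι ι ℂ := hT.1.eigenvectorUnitary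
noncomputable def ev (hT : T.PosSemidef) : ι → ℝ := hT.1.eigenvalues
noncomputable def Rm (hT : T.PosSemidef) : Matrix ι ι ℂ := fc (eU hT) (ev hT) rfun
noncomputable def Pm (hT : T.PosSemidef) : Matrix ι ι ℂ := fc (eU hT) (ev hT) Real.sqrt
noncomputable def Qm (hT : T.PosSemidef) : Matrix ι ι ℂ := fc (eU hT) (ev hT) qfun

lemma eU_star_mul (hT : T.PosSemidef) : star (eU hT) * eU hT = 1 :=
  Matrix.mem_unitaryGroup_iff'.mp hT.1.eigenvectorUnitary.2

lemma eU_mul_star (hT : T.PosSemidef) : eU hT * star (eU hT) = 1 :=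
  Matrix.mem_unitaryGroup_iff.mp hT.1.eigenvectorUnitary.2

lemma fc_id_eq (hT : T.PosSemidef) : fc (eU hT) (ev hT) (fun x => x) = T := by
  unfold fc eU ev
  exact (spec hT.1).symm

lemma RTR_eq_Qm (hT : T.PosSemidef) : Rm hT * T * Rm hT = Qm hT := by
  suffices h : ∀ S : Matrix ι ι ℂ, S = fc (eU hT) (ev hT) (fun x => x) →
      Rm hT * S * Rm hT = Qm hT from h T (fc_id_eq hT).symm
  intro S hS
  rw [hS]
  unfold Rm Qm
  rw [fc_mul (eU_star_mul hT), fc_mul (eU_star_mul hT)]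
  refine fc_congr fun k => ?_
  unfold rfun qfun
  by_cases h : 0 < ev hT k
  · simp only [if_pos h]
    have hs : Real.sqrt (ev hT k) ≠ 0 := by
      exact (Real.sqrt_pos.mpr h).ne'
    rw [← Real.mul_self_sqrt h.le]
    field_simp
    rw [Real.sqrt_sq (Real.sqrt_nonneg _)]
  · simp [if_neg h]

lemma Pm_mul_Pm (hT : T.PosSemidef) : Pm hT * Pm hT = T := by
  unfold Pm
  rw [fc_mul (eU_star_mul hT)]
  rw [fc_congr (g := fun x => x) fun k => Real.mul_self_sqrt (hT.eigenvalues_nonneg k)]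
  exact fc_id_eq hT

lemma Rm_herm (hT : T.PosSemidef) : (Rm hT).IsHermitian := fc_herm _
lemma Pm_herm (hT : T.PosSemidef) : (Pm hT).IsHermitian := fc_herm _
lemma Rm_psd (hT : T.PosSemidef) : (Rm hT).PosSemidef := by
  refine fc_psd _ fun k => ?_
  unfold rfun
  split <;> positivity

lemma one_sub_Qm_psd (hT : T.PosSemidef) : ((1 : Matrix ι ι ℂ) - Qm hT).PosSemidef := by
  rw [show (1 : Matrix ι ι ℂ) = fc (eU hT) (ev hT) (fun _ => 1) from (fc_one (eU_mul_star hT)).symm]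
  unfold Qm
  rw [fc_sub]
  refine fc_psd _ fun k => ?_
  unfold qfun
  split <;> norm_num

/-- kernel lemma : if T - M and M are PSD, entries of star U * M * U vanish on
the kernel eigendirections of T. -/
lemma Y_eq_zero (hT : T.PosSemidef) {M : Matrix ι ι ℂ} (hM : M.PosSemidef)
    (hTM : (T - M).PosSemidef) (k l : ι) (h : ev hT k = 0 ∨ ev hT l = 0) :
    (star (eU hT) * M * eU hT) k l = 0 := by
  have main : ∀ j : ι, ev hT j = 0 → M *ᵥ (fun i => eU hT i j) = 0 := by
    intro j hj
    set u : ι → ℂ := fun i => eU hT i j with hu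
    have hTU : T * eU hT = eU hT * diagonal (RCLike.ofReal ∘ hT.1.eigenvalues) := by
      have e := congrArg (fun Z : Matrix ι ι ℂ => Z * eU hT) (spec hT.1)
      beta_reduce at e
      have h1 : (star (hT.1.eigenvectorUnitary : Matrix ι ι ℂ)) * eU hT = 1 := eU_star_mul hT
      rw [e, Matrix.mul_assoc _ _ (eU hT), h1, Matrix.mul_one]
      rfl
    have hTu : T *ᵥ u = 0 := by
      funext i
      have h1 : (T *ᵥ u) i = (T * eU hT) i j := by
        simp [Matrix.mulVec, Matrix.mul_apply, hu, dotProduct]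
      rw [h1, hTU, Matrix.mul_diagonal]
      simp [ev] at hj
      simp [Function.comp, ev, hj]
    have hMu0 : star u ⬝ᵥ (M *ᵥ u) = 0 := by
      have hge : 0 ≤ star u ⬝ᵥ (M *ᵥ u) := hM.dotProduct_mulVec_nonneg u
      have hle := hTM.dotProduct_mulVec_nonneg u
      rw [Matrix.sub_mulVec, dotProduct_sub, hTu, dotProduct_zero, zero_sub] at hle
      exact le_antisymm (neg_nonneg.mp hle) hge
    set m := hM.sqrt with hm
    have hmu : m *ᵥ u = 0 := by
      have h2 : star u ⬝ᵥ (M *ᵥ u) = star (m *ᵥ u) ⬝ᵥ (m *ᵥ u) := by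
        conv_lhs => rw [← hM.sqrt_mul_self]
        rw [← Matrix.mulVec_mulVec, dotProduct_mulVec, star_mulVec, hM.posSemidef_sqrt.1.eq]
      rw [h2] at hMu0
      exact dotProduct_star_self_eq_zero.mp hMu0
    calc M *ᵥ u = m *ᵥ (m *ᵥ u) := by rw [Matrix.mulVec_mulVec, hM.sqrt_mul_self]
      _ = 0 := by rw [hmu, Matrix.mulVec_zero]
  have col : ∀ k' l' : ι, ev hT l' = 0 → (star (eU hT) * M * eU hT) k' l' = 0 := by
    intro k' l' hl'
    have h1 : (star (eU hT) * M * eU hT) k' l'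
        = ((star (eU hT) * M) *ᵥ (fun i => eU hT i l')) k' := by
      simp [Matrix.mul_apply, Matrix.mulVec, dotProduct]
    rw [h1, ← Matrix.mulVec_mulVec, main l' hl', Matrix.mulVec_zero]
    rfl
  have hYh : (star (eU hT) * M * eU hT).IsHermitian := by
    have := Matrix.isHermitian_conjTranspose_mul_mul (eU hT) hM.1
    rwa [← Matrix.star_eq_conjTranspose] at this
  rcases h with h | h
  · rw [← hYh.apply k l, col l k h, star_zero]
  · exact col k l h


set_option maxHeartbeats 1600000 in
theorem key_ineq {M : Matrix ι ι ℂ} (hT : T.PosSemidef) (hM : M.PosSemidef)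
    (hTM : (T - M).PosSemidef) :
    2 * ((M * M).trace).re
      ≤ ((T * M).trace).re + ((Rm hT * M * Rm hT * (M * M)).trace).re := by
  have hU1 := eU_star_mul hT
  have hU2 := eU_mul_star hT
  have hYh : (star (eU hT) * M * eU hT).IsHermitian := by
    have := Matrix.isHermitian_conjTranspose_mul_mul (eU hT) hM.1
    rwa [← Matrix.star_eq_conjTranspose] at this
  have hprod : ∀ k l, (star (eU hT) * M * eU hT) k l * (star (eU hT) * M * eU hT) l k
      = (Complex.normSq ((star (eU hT) * M * eU hT) k l) : ℂ) := by
    intro k l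
    rw [← hYh.apply l k, Complex.star_def, Complex.mul_conj]
  set c : ι → ι → ℝ := fun k l => Complex.normSq ((star (eU hT) * M * eU hT) k l) with hc
  have hc0 : ∀ k l, 0 ≤ c k l := fun k l => Complex.normSq_nonneg _
  have hcsym : ∀ k l, c k l = c l k := by
    intro k l
    rw [hc]
    simp only
    rw [← hYh.apply l k, Complex.star_def, Complex.normSq_conj]
  -- trace of M*M in coordinates
  have h0 : ((M * M).trace).re = ∑ k, ∑ l, c k l := by
    have q0 := trace_fc_quad (t := ev hT) hU1 (fun _ => (1:ℝ)) (fun _ => (1:ℝ)) M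
    rw [fc_one hU2, Matrix.one_mul, Matrix.mul_one] at q0
    rw [q0]
    simp only [hprod, one_mul, Complex.ofReal_one]
    simp [Complex.re_sum]; rfl
  -- trace of P M R M in coordinates
  set a : ι → ι → ℝ := fun k l => Real.sqrt (ev hT k) * rfun (ev hT l) with ha
  have h2 : ((Pm hT * M * Rm hT * M).trace).re = ∑ k, ∑ l, a k l * c k l := by
    have q2 := trace_fc_quad (t := ev hT) hU1 Real.sqrt rfun M
    rw [show fc (eU hT) (ev hT) Real.sqrt = Pm hT from rfl,
        show fc (eU hT) (ev hT) rfun = Rm hT from rfl] at q2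
    rw [q2]
    simp only [hprod, ← Complex.ofReal_mul]
    simp [Complex.re_sum]; rfl
  -- pairing inequality
  have hD1 : ∑ k, ∑ l, c k l ≤ ∑ k, ∑ l, a k l * c k l := by
    have hswap : ∑ k, ∑ l, a l k * c k l = ∑ k, ∑ l, a k l * c k l := by
      rw [Finset.sum_comm]
      refine Finset.sum_congr rfl fun k _ => Finset.sum_congr rfl fun l _ => ?_
      rw [hcsym k l]
    have hpair : ∀ k l, 2 * c k l ≤ (a k l + a l k) * c k l := by
      intro k l
      by_cases hY : (star (eU hT) * M * eU hT) k l = 0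
      · have : c k l = 0 := by rw [hc]; simp [hY]
        rw [this]; simp
      · have htk : 0 < ev hT k := by
          rcases lt_or_eq_of_le (hT.eigenvalues_nonneg k) with h | h
          · exact h
          · exact absurd (Y_eq_zero hT hM hTM k l (Or.inl h.symm)) hY
        have htl : 0 < ev hT l := by
          rcases lt_or_eq_of_le (hT.eigenvalues_nonneg l) with h | h
          · exact h
          · exact absurd (Y_eq_zero hT hM hTM k l (Or.inr h.symm)) hY
        have hsa : 0 < Real.sqrt (ev hT k) := Real.sqrt_pos.mpr htk
        have hsb : 0 < Real.sqrt (ev hT l) := Real.sqrt_pos.mpr htl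
        have h2le : 2 ≤ a k l + a l k := by
          rw [ha]
          simp only [rfun, if_pos htk, if_pos htl]
          rw [← div_eq_mul_inv, ← div_eq_mul_inv, div_add_div _ _ hsb.ne' hsa.ne',
            le_div_iff₀ (by positivity)]
          nlinarith [sq_nonneg (Real.sqrt (ev hT k) - Real.sqrt (ev hT l))]
        exact mul_le_mul_of_nonneg_right h2le (hc0 k l)
    have hsum : 2 * (∑ k, ∑ l, c k l) ≤ ∑ k, ∑ l, (a k l + a l k) * c k l := by
      rw [Finset.mul_sum]
      refine Finset.sum_le_sum fun k _ => ?_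
      rw [Finset.mul_sum]
      exact Finset.sum_le_sum fun l _ => hpair k l
    have hsplit : ∑ k, ∑ l, (a k l + a l k) * c k l
        = (∑ k, ∑ l, a k l * c k l) + ∑ k, ∑ l, a l k * c k l := by
      rw [← Finset.sum_add_distrib]
      refine Finset.sum_congr rfl fun k _ => ?_
      rw [← Finset.sum_add_distrib]
      exact Finset.sum_congr rfl fun l _ => by ring
    rw [hsplit, hswap] at hsum
    linarith
  -- Cauchy-Schwarz part
  set m := hM.sqrt with hm
  have hmh : mᴴ = m := hM.posSemidef_sqrt.1
  have hm2 : m * m = M := hM.sqrt_mul_self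
  have hPh : (Pm hT)ᴴ = Pm hT := Pm_herm hT
  have hRh : (Rm hT)ᴴ = Rm hT := Rm_herm hT
  have e_wv : ((Pm hT * m)ᴴ * (M * Rm hT * m)).trace = (Pm hT * M * Rm hT * M).trace := by
    have e : (Pm hT * m)ᴴ * (M * Rm hT * m) = m * (Pm hT * (M * (Rm hT * m))) := by
      rw [Matrix.conjTranspose_mul, hmh, hPh]
      simp only [Matrix.mul_assoc]
    rw [e, Matrix.trace_mul_comm]
    refine congrArg Matrix.trace ?_
    simp only [Matrix.mul_assoc]
    rw [hm2]
  have e_ww : ((Pm hT * m)ᴴ * (Pm hT * m)).trace = (T * M).trace := by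
    have e : (Pm hT * m)ᴴ * (Pm hT * m) = m * (Pm hT * (Pm hT * m)) := by
      rw [Matrix.conjTranspose_mul, hmh, hPh]
      simp only [Matrix.mul_assoc]
    rw [e, Matrix.trace_mul_comm]
    have e2 : Pm hT * (Pm hT * m) * m = T * M := by
      rw [← Matrix.mul_assoc, Pm_mul_Pm hT, Matrix.mul_assoc, hm2]
    rw [e2]
  have e_vv : ((M * Rm hT * m)ᴴ * (M * Rm hT * m)).trace
      = (Rm hT * M * Rm hT * (M * M)).trace := by
    have e : (M * Rm hT * m)ᴴ * (M * Rm hT * m)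
        = m * (Rm hT * (M * (M * (Rm hT * m)))) := by
      rw [Matrix.conjTranspose_mul, Matrix.conjTranspose_mul, hmh, hRh, hM.1.eq]
      simp only [Matrix.mul_assoc]
    rw [e, Matrix.trace_mul_comm]
    have e2 : Rm hT * (M * (M * (Rm hT * m))) * m = (Rm hT * M * M) * (Rm hT * M) := by
      simp only [Matrix.mul_assoc]
      rw [hm2]
    rw [e2, Matrix.trace_mul_comm]
    refine congrArg Matrix.trace ?_
    simp only [Matrix.mul_assoc]
  have hCS := trace_re_conj_le (Pm hT * m) (M * Rm hT * m)
  rw [e_wv, e_ww, e_vv] at hCS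
  rw [h2] at hCS
  linarith [hD1, hCS, h0.ge, h0.le]

end PGMaux

namespace PGMaux
variable {ι : Type*} [Fintype ι] [DecidableEq ι]

lemma sqrt_eq_Pm {K : Matrix ι ι ℂ} (hK : K.PosSemidef) : hK.sqrt = Pm hK := rfl

lemma trace_Pm_re {K : Matrix ι ι ℂ} (hK : K.PosSemidef) :
    ((Pm hK).trace).re = ∑ k, Real.sqrt (ev hK k) := by
  have q := trace_fc_mul (t := ev hK) (eU_star_mul hK) Real.sqrt (1 : Matrix ι ι ℂ)
  rw [show fc (eU hK) (ev hK) Real.sqrt = Pm hK from rfl] at q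
  rw [Matrix.mul_one] at q
  have e : star (eU hK) * (1 : Matrix ι ι ℂ) * eU hK = 1 := by
    rw [Matrix.mul_one, eU_star_mul hK]
  rw [e] at q
  rw [q]
  simp [Complex.re_sum, Matrix.one_apply]

theorem retrace_sqrt_le_mFid {ρ σ : Matrix ι ι ℂ} (hρ : ρ.PosSemidef) (hσ : σ.PosSemidef) :
    ((hρ.sqrt * hσ.sqrt).trace).re ≤ mFid ρ σ := by
  have hK : (hρ.sqrt * σ * hρ.sqrt).PosSemidef := by
    have := hσ.mul_mul_conjTranspose_same hρ.sqrt
    rwa [hρ.posSemidef_sqrt.1.eq] at this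
  have hmfid : mFid ρ σ = ((Pm hK).trace).re := by
    unfold mFid matSqrt
    rw [dif_pos hρ]
    erw [dif_pos hK]
    rfl
  rw [hmfid, trace_Pm_re hK]
  -- coordinates
  set V := eU hK with hV
  set X := hρ.sqrt * hσ.sqrt with hX
  set Z := star V * X * V with hZ
  have htr : (X.trace).re = (Z.trace).re := by
    rw [hZ, Matrix.trace_mul_cycle, ← Matrix.mul_assoc, eU_mul_star hK, Matrix.one_mul]
  have hXX : X * Xᴴ = hρ.sqrt * σ * hρ.sqrt := by
    rw [hX, Matrix.conjTranspose_mul, hρ.posSemidef_sqrt.1.eq, hσ.posSemidef_sqrt.1.eq]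
    have : hρ.sqrt * hσ.sqrt * (hσ.sqrt * hρ.sqrt)
        = hρ.sqrt * (hσ.sqrt * hσ.sqrt) * hρ.sqrt := by
      simp only [Matrix.mul_assoc]
    rw [this, hσ.sqrt_mul_self]
  have hdiag : Z * Zᴴ = diagonal (fun k => (ev hK k : ℂ)) := by
    have e1 : Z * Zᴴ = star V * (X * Xᴴ) * V := by
      rw [hZ]
      rw [Matrix.conjTranspose_mul, Matrix.conjTranspose_mul]
      rw [show (star V)ᴴ = V from by rw [← Matrix.star_eq_conjTranspose, star_star]]
      rw [show Vᴴ = star V from (Matrix.star_eq_conjTranspose V).symm]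
      calc star V * X * V * (star V * (Xᴴ * V)) = star V * (X * (V * star V) * (Xᴴ * V)) := by
            simp only [Matrix.mul_assoc]
        _ = star V * (X * Xᴴ) * V := by rw [eU_mul_star hK]; simp only [Matrix.mul_one, Matrix.mul_assoc]
    rw [e1, hXX]
    have e2 := congrArg (fun W : Matrix ι ι ℂ => star (eU hK) * W * eU hK) (spec hK.1)
    beta_reduce at e2
    rw [← hV] at e2
    rw [e2]
    have h1 : (star V) * ((hK.1.eigenvectorUnitary : Matrix ι ι ℂ)
        * diagonal (RCLike.ofReal ∘ hK.1.eigenvalues) * star (hK.1.eigenvectorUnitary : Matrix ι ι ℂ)) * V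
        = ((star V) * V) * diagonal (RCLike.ofReal ∘ hK.1.eigenvalues) * ((star V) * V) := by
      show (star V) * (V * diagonal (RCLike.ofReal ∘ hK.1.eigenvalues) * star V) * V = _
      simp only [Matrix.mul_assoc]
    rw [h1, eU_star_mul hK, Matrix.one_mul, Matrix.mul_one]
    rfl
  have hrow : ∀ k, ∑ l, Complex.normSq (Z k l) = ev hK k := by
    intro k
    have e := congrFun (congrFun hdiag k) k
    rw [Matrix.mul_apply, Matrix.diagonal_apply_eq] at e
    have : ∀ l, Z k l * Zᴴ l k = (Complex.normSq (Z k l) : ℂ) := by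
      intro l
      rw [Matrix.conjTranspose_apply, Complex.star_def, Complex.mul_conj]
    rw [Finset.sum_congr rfl (fun l _ => this l)] at e
    exact_mod_cast e
  have hdiag_le : ∀ k, (Z k k).re ≤ Real.sqrt (ev hK k) := by
    intro k
    calc (Z k k).re ≤ ‖Z k k‖ := Complex.re_le_norm _
      _ = Real.sqrt (Complex.normSq (Z k k)) := by rw [Complex.norm_def]
      _ ≤ Real.sqrt (∑ l, Complex.normSq (Z k l)) := by
          apply Real.sqrt_le_sqrt
          exact Finset.single_le_sum (f := fun l => Complex.normSq (Z k l))
            (fun l _ => Complex.normSq_nonneg _) (Finset.mem_univ k)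
      _ = Real.sqrt (ev hK k) := by rw [hrow k]
  rw [htr]
  rw [Matrix.trace]
  rw [show (∑ k, Z.diag k).re = ∑ k, (Z k k).re from by simp [Matrix.diag, Complex.re_sum]]
  exact Finset.sum_le_sum fun k _ => hdiag_le k


lemma sum_ite_sub {α : Type*} [Fintype α] [DecidableEq α] (i : α) (g : α → ℝ) :
    ∑ j, (if i = j then 0 else g j) = (∑ j, g j) - g i := by
  have h1 : ∑ j, (if i = j then g j else 0) = g i := by simp
  have h2 : ∀ j, (if i = j then 0 else g j) = g j - (if i = j then g j else 0) := by
    intro j; split <;> simp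
  rw [Finset.sum_congr rfl (fun j _ => h2 j), Finset.sum_sub_distrib, h1]

end PGMaux

open PGMaux

/-- Pretty-good-measurement upper bound: there exists a POVM whose
misclassification probability is at most Σ_{i≠j} √(π_i π_j) F(ρ_i, ρ_j). -/
theorem pgm_fidelity_upper_bound (N n : ℕ) (hN : 1 ≤ N)
    (ρ : Fin N → Matrix (Fin n) (Fin n) ℂ)
    (hρ : ∀ i, (ρ i).PosSemidef) (htr : ∀ i, (ρ i).trace = 1)
    (π : Fin N → ℝ) (hπ : ∀ i, 0 ≤ π i) (hπsum : ∑ i, π i = 1) :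
    ∃ P : Fin N → Matrix (Fin n) (Fin n) ℂ,
      (∀ j, (P j).PosSemidef) ∧ (∑ j, P j = 1) ∧
        (∑ i, ∑ j, if i = j then 0 else π i * ((P j * ρ i).trace).re) ≤
          ∑ i, ∑ j, if i = j then 0
            else Real.sqrt (π i * π j) * mFid (ρ i) (ρ j) := by
  classical
  set Mi : Fin N → Matrix (Fin n) (Fin n) ℂ :=
    fun i => ((Real.sqrt (π i) : ℝ) : ℂ) • (hρ i).sqrt with hMidef
  have hMi : ∀ i, (Mi i).PosSemidef :=
    fun i => psd_smul (hρ i).posSemidef_sqrt (Real.sqrt_nonneg _)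
  have hMiMi : ∀ i, Mi i * Mi i = ((π i : ℝ) : ℂ) • ρ i := by
    intro i
    rw [hMidef]
    simp only
    rw [Matrix.smul_mul, Matrix.mul_smul, smul_smul, (hρ i).sqrt_mul_self]
    congr 1
    rw [← Complex.ofReal_mul, Real.mul_self_sqrt (hπ i)]
  set T : Matrix (Fin n) (Fin n) ℂ := ∑ i, Mi i with hTdef
  have hT : T.PosSemidef := psd_sum _ _ fun i _ => hMi i
  have hTMi : ∀ i, (T - Mi i).PosSemidef := by
    intro i
    have e : T - Mi i = ∑ j ∈ Finset.univ.erase i, Mi j := by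
      rw [hTdef, ← Finset.add_sum_erase _ Mi (Finset.mem_univ i)]
      rw [add_sub_cancel_left]
    rw [e]
    exact psd_sum _ _ fun j _ => hMi j
  set R : Matrix (Fin n) (Fin n) ℂ := Rm hT with hRdef
  have hRh : Rᴴ = R := Rm_herm hT
  set Pov : Fin N → Matrix (Fin n) (Fin n) ℂ :=
    fun j => R * Mi j * R + (((N : ℝ)⁻¹ : ℝ) : ℂ) • ((1 : Matrix (Fin n) (Fin n) ℂ) - Qm hT)
    with hPovdef
  have hNne : ((N : ℝ)) ≠ 0 := Nat.cast_ne_zero.mpr (by omega)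
  have hSumPov : ∑ j, Pov j = 1 := by
    rw [hPovdef]
    rw [Finset.sum_add_distrib]
    have e1 : ∑ j, R * Mi j * R = R * T * R := by
      rw [← Finset.sum_mul, ← Finset.mul_sum, hTdef]
    have e2 : (∑ _j : Fin N, (((N : ℝ)⁻¹ : ℝ) : ℂ) • ((1 : Matrix (Fin n) (Fin n) ℂ) - Qm hT))
        = (1 : Matrix (Fin n) (Fin n) ℂ) - Qm hT := by
      rw [Finset.sum_const, Finset.card_univ, Fintype.card_fin]
      rw [← Nat.cast_smul_eq_nsmul ℂ, smul_smul]
      rw [show ((N:ℕ):ℂ) * (((N : ℝ)⁻¹ : ℝ) : ℂ) = 1 from ?_, one_smul]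
      push_cast
      rw [mul_inv_cancel₀]
      exact_mod_cast Nat.cast_ne_zero.mpr (by omega)
    rw [e1, e2, hRdef, RTR_eq_Qm hT, add_sub_cancel]
  refine ⟨Pov, ?_, hSumPov, ?_⟩
  · intro j
    refine Matrix.PosSemidef.add ?_ ?_
    · have := (hMi j).mul_mul_conjTranspose_same R
      rwa [hRh] at this
    · exact psd_smul (one_sub_Qm_psd hT) (by positivity)
  · refine Finset.sum_le_sum fun i _ => ?_
    -- convert terms to traces against Ai := Mi i * Mi i
    have hterm : ∀ j, π i * ((Pov j * ρ i).trace).re = ((Pov j * (Mi i * Mi i)).trace).re := by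
      intro j
      rw [hMiMi i, Matrix.mul_smul, Matrix.trace_smul]
      simp
    have hconv : (∑ j, if i = j then 0 else π i * ((Pov j * ρ i).trace).re)
        = ∑ j, (if i = j then 0 else ((Pov j * (Mi i * Mi i)).trace).re) := by
      refine Finset.sum_congr rfl fun j _ => ?_
      by_cases h : i = j
      · simp [h]
      · simp only [if_neg h, hterm j]
    rw [hconv, sum_ite_sub]
    have S1 : ∑ j, ((Pov j * (Mi i * Mi i)).trace).re = (((Mi i * Mi i)).trace).re := by
      have e : ∑ j, Pov j * (Mi i * Mi i) = (Mi i * Mi i) := by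
        rw [← Finset.sum_mul, hSumPov, Matrix.one_mul]
      rw [← Complex.re_sum, ← Matrix.trace_sum, e]
    have hAipsd : (Mi i * Mi i).PosSemidef := by
      rw [hMiMi i]; exact psd_smul (hρ i) (hπ i)
    have S2 : ((R * Mi i * R * (Mi i * Mi i)).trace).re
        ≤ ((Pov i * (Mi i * Mi i)).trace).re := by
      rw [hPovdef]
      simp only
      rw [Matrix.add_mul, Matrix.trace_add, Complex.add_re]
      have h2 : 0 ≤ (((((N : ℝ)⁻¹ : ℝ) : ℂ) • ((1 : Matrix (Fin n) (Fin n) ℂ) - Qm hT)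
          * (Mi i * Mi i)).trace).re := by
        rw [Matrix.smul_mul, Matrix.trace_smul]
        have := trace_re_mul_psd_nonneg (one_sub_Qm_psd hT) hAipsd
        have hinv : (0:ℝ) ≤ (N:ℝ)⁻¹ := by positivity
        calc (0:ℝ) ≤ (N:ℝ)⁻¹ * ((((1 : Matrix (Fin n) (Fin n) ℂ) - Qm hT) * (Mi i * Mi i)).trace).re :=
              mul_nonneg hinv this
          _ = _ := by simp
      linarith
    have key := key_ineq hT (hMi i) (hTMi i)
    have S3 : ((T * Mi i).trace).re = ∑ j, ((Mi j * Mi i).trace).re := by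
      have e : T * Mi i = ∑ j, Mi j * Mi i := by rw [hTdef, Finset.sum_mul]
      rw [e, Matrix.trace_sum, Complex.re_sum]
    have final_j : ∀ j, i ≠ j → ((Mi j * Mi i).trace).re
        ≤ Real.sqrt (π i * π j) * mFid (ρ i) (ρ j) := by
      intro j _
      have e : Mi j * Mi i
          = ((Real.sqrt (π i) * Real.sqrt (π j) : ℝ) : ℂ) • ((hρ j).sqrt * (hρ i).sqrt) := by
        rw [hMidef]
        simp only
        rw [Matrix.smul_mul, Matrix.mul_smul, smul_smul]
        congr 1
        rw [← Complex.ofReal_mul]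
        congr 1
        ring
      rw [e, Matrix.trace_smul]
      rw [show ∀ z : ℂ, (((Real.sqrt (π i) * Real.sqrt (π j) : ℝ) : ℂ) • z).re
          = (Real.sqrt (π i) * Real.sqrt (π j)) * z.re from fun z => by simp]
      rw [Real.sqrt_mul (hπ i)]
      refine mul_le_mul_of_nonneg_left ?_ (by positivity)
      rw [Matrix.trace_mul_comm]
      exact retrace_sqrt_le_mFid (hρ i) (hρ j)
    calc (∑ j, ((Pov j * (Mi i * Mi i)).trace).re) - ((Pov i * (Mi i * Mi i)).trace).re
        ≤ (((Mi i * Mi i)).trace).re - ((R * Mi i * R * (Mi i * Mi i)).trace).re := by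
          rw [S1]; linarith [S2]
      _ ≤ ((T * Mi i).trace).re - (((Mi i * Mi i)).trace).re := by linarith [key]
      _ = (∑ j, ((Mi j * Mi i).trace).re) - ((Mi i * Mi i).trace).re := by rw [S3]
      _ = ∑ j, (if i = j then 0 else ((Mi j * Mi i).trace).re) := by rw [sum_ite_sub]
      _ ≤ ∑ j, (if i = j then 0 else Real.sqrt (π i * π j) * mFid (ρ i) (ρ j)) := by
          refine Finset.sum_le_sum fun j _ => ?_
          by_cases h : i = j
          · simp [h]
          · simp only [if_neg h]
            exact final_j j h
end

section
/- Let m, v, u, t be natural numbers with max(v, u) ≤ t ≤ v + u. Then the number of ordered pairs (i, i') of binary patterns on Fin m with Hamming weight |i| = v, |i'| = u, and Hamming distance d(i, i') = 2t − (v + u) (equivalently, with the union of their supports having exactly t elements) equals C(m, t) · C(t, u) · C(u, (v+u) − t), where C denotes the binomial coefficient. -/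
/-- Hamming weight of a binary pattern: the number of positions with value true. -/
def patWeight {α : Type*} [Fintype α] (i : α → Bool) : ℕ :=
  (Finset.univ.filter fun x => i x = true).card

section aux

variable {m : ℕ}

/-- support of a pattern -/
private def psupp (i : Fin m → Bool) : Finset (Fin m) :=
  Finset.univ.filter fun x => i x = true

private lemma mem_psupp {i : Fin m → Bool} {x : Fin m} : x ∈ psupp i ↔ i x = true := by
  simp [psupp]

private lemma patWeight_eq (i : Fin m → Bool) : patWeight i = (psupp i).card := rfl

private lemma psupp_decide (E : Finset (Fin m)) :
    psupp (fun x => decide (x ∈ E)) = E := by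
  ext x; simp [mem_psupp]

private lemma hammingDist_eq (i i' : Fin m → Bool) :
    hammingDist i i' = ((psupp i ∪ psupp i') \ (psupp i ∩ psupp i')).card := by
  unfold hammingDist
  congr 1
  ext x
  simp only [Finset.mem_filter, Finset.mem_univ, true_and, Finset.mem_sdiff,
    Finset.mem_union, Finset.mem_inter, mem_psupp]
  cases h : i x <;> cases h' : i' x <;> simp

end aux

/-- Counting pattern pairs: the number of ordered pairs (i, i') with weights v and u
and Hamming distance 2t − (v+u) equals C(m,t)·C(t,u)·C(u,(v+u)−t). -/
theorem card_pattern_pairs_fixed_hammingDist (m v u t : ℕ)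
    (h1 : max v u ≤ t) (h2 : t ≤ v + u) :
    ((Finset.univ : Finset ((Fin m → Bool) × (Fin m → Bool))).filter fun p =>
        patWeight p.1 = v ∧ patWeight p.2 = u ∧
          hammingDist p.1 p.2 = 2 * t - (v + u)).card =
      Nat.choose m t * Nat.choose t u * Nat.choose u ((v + u) - t) := by
  have hv : v ≤ t := le_trans (le_max_left _ _) h1
  have hu : u ≤ t := le_trans (le_max_right _ _) h1
  -- rewrite the filter condition in terms of supports
  have hfilter :
      ((Finset.univ : Finset ((Fin m → Bool) × (Fin m → Bool))).filter fun p =>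
        patWeight p.1 = v ∧ patWeight p.2 = u ∧
          hammingDist p.1 p.2 = 2 * t - (v + u)) =
      ((Finset.univ : Finset ((Fin m → Bool) × (Fin m → Bool))).filter fun p =>
        (psupp p.1).card = v ∧ (psupp p.2).card = u ∧
          (psupp p.1 ∪ psupp p.2).card = t) := by
    apply Finset.filter_congr
    intro p _
    rw [patWeight_eq, patWeight_eq, hammingDist_eq]
    constructor
    · rintro ⟨hA, hB, hd⟩
      refine ⟨hA, hB, ?_⟩
      have hsub : psupp p.1 ∩ psupp p.2 ⊆ psupp p.1 ∪ psupp p.2 :=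
        le_trans Finset.inter_subset_left Finset.subset_union_left
      have hcd := Finset.card_sdiff_of_subset hsub
      have hui := Finset.card_union_add_card_inter (psupp p.1) (psupp p.2)
      have hk : (psupp p.1 ∩ psupp p.2).card ≤ (psupp p.1 ∪ psupp p.2).card :=
        Finset.card_le_card hsub
      omega
    · rintro ⟨hA, hB, hU⟩
      refine ⟨hA, hB, ?_⟩
      have hsub : psupp p.1 ∩ psupp p.2 ⊆ psupp p.1 ∪ psupp p.2 :=
        le_trans Finset.inter_subset_left Finset.subset_union_left
      have hcd := Finset.card_sdiff_of_subset hsub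
      have hui := Finset.card_union_add_card_inter (psupp p.1) (psupp p.2)
      omega
  rw [hfilter]
  -- target: sigma of powersetCards
  have hcard :
      (((Finset.univ : Finset (Fin m)).powersetCard t).sigma fun S =>
        (S.powersetCard u).sigma fun B => B.powersetCard ((v + u) - t)).card =
      Nat.choose m t * Nat.choose t u * Nat.choose u ((v + u) - t) := by
    rw [Finset.card_sigma]
    have : ∀ S ∈ (Finset.univ : Finset (Fin m)).powersetCard t,
        ((S.powersetCard u).sigma fun B => B.powersetCard ((v + u) - t)).card =
        Nat.choose t u * Nat.choose u ((v + u) - t) := by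
      intro S hS
      rw [Finset.mem_powersetCard] at hS
      rw [Finset.card_sigma]
      have : ∀ B ∈ S.powersetCard u, (B.powersetCard ((v + u) - t)).card =
          Nat.choose u ((v + u) - t) := by
        intro B hB
        rw [Finset.mem_powersetCard] at hB
        rw [Finset.card_powersetCard, hB.2]
      rw [Finset.sum_congr rfl this, Finset.sum_const, Finset.card_powersetCard, hS.2,
        smul_eq_mul]
    rw [Finset.sum_congr rfl this, Finset.sum_const, Finset.card_powersetCard,
      Finset.card_univ, Fintype.card_fin, smul_eq_mul, mul_assoc]
  rw [← hcard]
  apply Finset.card_bij'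
    (i := fun p _ => (⟨psupp p.1 ∪ psupp p.2, psupp p.2, psupp p.1 ∩ psupp p.2⟩ :
      Σ _ : Finset (Fin m), Σ _ : Finset (Fin m), Finset (Fin m)))
    (j := fun s _ => ((fun x => decide (x ∈ (s.1 \ s.2.1) ∪ s.2.2)),
      fun x => decide (x ∈ s.2.1)))
  · -- hi : maps into target
    intro p hp
    rw [Finset.mem_filter] at hp
    obtain ⟨-, hA, hB, hU⟩ := hp
    have hui := Finset.card_union_add_card_inter (psupp p.1) (psupp p.2)
    simp only [Finset.mem_sigma, Finset.mem_powersetCard]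
    refine ⟨⟨Finset.subset_univ _, hU⟩, ⟨Finset.subset_union_right, hB⟩,
      ⟨Finset.inter_subset_right, by omega⟩⟩
  · -- hj : maps into source
    intro s hs
    simp only [Finset.mem_sigma, Finset.mem_powersetCard] at hs
    obtain ⟨⟨-, hS⟩, ⟨hBS, hB⟩, ⟨hCB, hC⟩⟩ := hs
    rw [Finset.mem_filter]
    refine ⟨Finset.mem_univ _, ?_, ?_, ?_⟩
    · show (psupp (fun x => decide (x ∈ (s.1 \ s.2.1) ∪ s.2.2))).card = v
      rw [psupp_decide]
      rw [Finset.card_union_of_disjoint, Finset.card_sdiff_of_subset hBS]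
      · omega
      · exact Disjoint.mono_right hCB Finset.sdiff_disjoint
    · show (psupp (fun x => decide (x ∈ s.2.1))).card = u
      rw [psupp_decide, hB]
    · show (psupp (fun x => decide (x ∈ (s.1 \ s.2.1) ∪ s.2.2)) ∪
        psupp (fun x => decide (x ∈ s.2.1))).card = t
      rw [psupp_decide, psupp_decide]
      have hUeq : (s.1 \ s.2.1 ∪ s.2.2) ∪ s.2.1 = s.1 := by
        rw [Finset.union_assoc, Finset.union_comm s.2.2,
          Finset.union_eq_left.mpr hCB, Finset.sdiff_union_of_subset hBS]
      rw [hUeq, hS]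
  · -- left inverse
    intro p hp
    ext x
    · simp only [mem_psupp, Finset.mem_union, Finset.mem_sdiff, Finset.mem_inter,
        decide_eq_true_eq]
      cases h : p.1 x <;> cases h' : p.2 x <;> simp [mem_psupp, h, h']
    · simp [mem_psupp]
  · -- right inverse
    intro s hs
    simp only [Finset.mem_sigma, Finset.mem_powersetCard] at hs
    obtain ⟨⟨-, hS⟩, ⟨hBS, hB⟩, ⟨hCB, hC⟩⟩ := hs
    have h1' : psupp (fun x => decide (x ∈ (s.1 \ s.2.1) ∪ s.2.2)) = (s.1 \ s.2.1) ∪ s.2.2 :=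
      psupp_decide _
    have h2' : psupp (fun x => decide (x ∈ s.2.1)) = s.2.1 := psupp_decide _
    have hU : ((s.1 \ s.2.1) ∪ s.2.2) ∪ s.2.1 = s.1 := by
      rw [Finset.union_assoc, Finset.union_comm s.2.2,
        Finset.union_eq_left.mpr hCB, Finset.sdiff_union_of_subset hBS]
    have hI : ((s.1 \ s.2.1) ∪ s.2.2) ∩ s.2.1 = s.2.2 := by
      rw [Finset.union_inter_distrib_right, Finset.sdiff_inter_self,
        Finset.empty_union, Finset.inter_eq_left.mpr hCB]
    obtain ⟨S, B, C⟩ := s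
    simp only at h1' h2' hU hI ⊢
    rw [h1', h2', hU, hI]
end

section
/- Let m ≥ 1 and k ≥ 1 with k ≤ m, and let h : ℕ → ℝ be any function. Then Σ over all ordered pairs (i, i') of DISTINCT binary patterns on Fin m, each of Hamming weight k, of h(d(i, i')) equals Σ_{t=k+1}^{2k} C(m, t) · C(t, k) · C(k, 2k − t) · h(2(t − k)), where C denotes the binomial coefficient and d the Hamming distance. -/
open Finset

/-- Trinomial revision identity. -/
lemma trinom_aux (m k t : ℕ) (hkt : k ≤ t) :
    m.choose k * (m - k).choose (t - k) = m.choose t * t.choose k := by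
  rcases le_or_gt t m with htm | htm
  · have hk : k ≤ m := hkt.trans htm
    apply Nat.eq_of_mul_eq_mul_right (Nat.factorial_pos k)
    apply Nat.eq_of_mul_eq_mul_right (Nat.factorial_pos (t - k))
    apply Nat.eq_of_mul_eq_mul_right (Nat.factorial_pos (m - t))
    have h1 : m.choose k * k.factorial * (m - k).factorial = m.factorial :=
      Nat.choose_mul_factorial_mul_factorial hk
    have h2 : (m - k).choose (t - k) * (t - k).factorial * (m - k - (t - k)).factorial
        = (m - k).factorial := Nat.choose_mul_factorial_mul_factorial (by omega)
    have h3 : m.choose t * t.factorial * (m - t).factorial = m.factorial :=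
      Nat.choose_mul_factorial_mul_factorial htm
    have h4 : t.choose k * k.factorial * (t - k).factorial = t.factorial :=
      Nat.choose_mul_factorial_mul_factorial hkt
    have e : m - k - (t - k) = m - t := by omega
    rw [e] at h2
    calc m.choose k * (m - k).choose (t - k) * k.factorial * (t - k).factorial * (m - t).factorial
        = (m.choose k * k.factorial) * ((m - k).choose (t - k) * (t - k).factorial * (m - t).factorial) := by ring
      _ = m.choose k * k.factorial * (m - k).factorial := by rw [h2]
      _ = m.factorial := by rw [← h1]
      _ = m.choose t * t.factorial * (m - t).factorial := h3.symm
      _ = m.choose t * (t.choose k * k.factorial * (t - k).factorial) * (m - t).factorial := by rw [h4]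
      _ = m.choose t * t.choose k * k.factorial * (t - k).factorial * (m - t).factorial := by ring
  · rcases le_or_gt k m with hkm | hkm
    · rw [Nat.choose_eq_zero_of_lt htm, Nat.choose_eq_zero_of_lt (by omega : m - k < t - k)]
      ring
    · rw [Nat.choose_eq_zero_of_lt hkm, Nat.choose_eq_zero_of_lt htm]
      ring

/-- Count of B with card k and given union card with a fixed A of card k. -/
lemma card_B_aux {m k t : ℕ} (A : Finset (Fin m)) (hA : A.card = k)
    (ht1 : k + 1 ≤ t) (ht2 : t ≤ 2 * k) :
    ((univ : Finset (Finset (Fin m))).filter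
        (fun B => B.card = k ∧ (A ∪ B).card = t)).card
      = k.choose (2 * k - t) * (m - k).choose (t - k) := by
  have hAc : Aᶜ.card = m - k := by
    rw [Finset.card_compl, hA]; simp
  rw [show k.choose (2*k - t) * (m-k).choose (t-k)
      = ((A.powersetCard (2*k - t)) ×ˢ (Aᶜ.powersetCard (t - k))).card by
    rw [Finset.card_product, Finset.card_powersetCard, Finset.card_powersetCard, hA, hAc]]
  apply Finset.card_bij' (fun B _ => (B ∩ A, B \ A)) (fun q _ => q.1 ∪ q.2)
  · rintro B hB
    simp only [mem_filter, mem_univ, true_and] at hB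
    obtain ⟨hBk, hBt⟩ := hB
    have h1 : (A ∪ B).card + (A ∩ B).card = A.card + B.card :=
      Finset.card_union_add_card_inter A B
    have h2 : (B \ A).card + A.card = (B ∪ A).card := Finset.card_sdiff_add_card B A
    rw [Finset.union_comm B A] at h2
    simp only [Finset.mem_product, Finset.mem_powersetCard]
    refine ⟨⟨Finset.inter_subset_right, ?_⟩, ⟨?_, ?_⟩⟩
    · rw [Finset.inter_comm]; omega
    · intro x hx
      simp only [Finset.mem_sdiff] at hx
      simp [Finset.mem_compl, hx.2]
    · omega
  · rintro ⟨C, D⟩ hq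
    simp only [Finset.mem_product, Finset.mem_powersetCard] at hq
    obtain ⟨⟨hCA, hCc⟩, hDA, hDc⟩ := hq
    have hdisj : Disjoint C D := by
      refine Finset.disjoint_left.mpr fun x hx hxD => ?_
      have := hDA hxD
      simp only [Finset.mem_compl] at this
      exact this (hCA hx)
    have hdisjAD : Disjoint A D := by
      refine Finset.disjoint_left.mpr fun x hx hxD => ?_
      have := hDA hxD
      simp only [Finset.mem_compl] at this
      exact this hx
    simp only [mem_filter, mem_univ, true_and]
    constructor
    · rw [Finset.card_union_of_disjoint hdisj]; omega
    · have : A ∪ (C ∪ D) = A ∪ D := by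
        rw [← Finset.union_assoc, Finset.union_eq_left.mpr hCA]
      rw [this, Finset.card_union_of_disjoint hdisjAD]; omega
  · rintro B hB
    ext x; simp only [Finset.mem_union, Finset.mem_inter, Finset.mem_sdiff]; tauto
  · rintro ⟨C, D⟩ hq
    simp only [Finset.mem_product, Finset.mem_powersetCard] at hq
    obtain ⟨⟨hCA, hCc⟩, hDA, hDc⟩ := hq
    have : ∀ x ∈ D, x ∉ A := by
      intro x hx; have := hDA hx; simpa [Finset.mem_compl] using this
    simp only [Prod.mk.injEq]
    constructor
    · ext x
      simp only [Finset.mem_inter, Finset.mem_union]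
      constructor
      · rintro ⟨hx | hx, hxA⟩
        · exact hx
        · exact absurd hxA (this x hx)
      · intro hx; exact ⟨Or.inl hx, hCA hx⟩
    · ext x
      simp only [Finset.mem_sdiff, Finset.mem_union]
      constructor
      · rintro ⟨hx | hx, hxA⟩
        · exact absurd (hCA hx) hxA
        · exact hx
      · intro hx; exact ⟨Or.inr hx, this x hx⟩

lemma card_fiber_aux (m k t : ℕ) (ht1 : k + 1 ≤ t) (ht2 : t ≤ 2 * k) :
    ((univ : Finset (Finset (Fin m) × Finset (Fin m))).filter
        (fun p => p.1.card = k ∧ p.2.card = k ∧ (p.1 ∪ p.2).card = t)).card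
      = m.choose k * (k.choose (2 * k - t) * (m - k).choose (t - k)) := by
  set S := ((univ : Finset (Finset (Fin m) × Finset (Fin m))).filter
      (fun p => p.1.card = k ∧ p.2.card = k ∧ (p.1 ∪ p.2).card = t)) with hS
  have hmap : ∀ p ∈ S, p.1 ∈ (univ : Finset (Finset (Fin m))).filter (fun A => A.card = k) := by
    intro p hp
    simp only [hS, mem_filter, mem_univ, true_and] at hp ⊢
    exact hp.1
  rw [Finset.card_eq_sum_card_fiberwise hmap]
  have hfib : ∀ A ∈ (univ : Finset (Finset (Fin m))).filter (fun A => A.card = k),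
      (S.filter (fun p => p.1 = A)).card
        = k.choose (2 * k - t) * (m - k).choose (t - k) := by
    intro A hA
    simp only [mem_filter, mem_univ, true_and] at hA
    rw [← card_B_aux A hA ht1 ht2]
    apply Finset.card_bij (fun p _ => p.2)
    · rintro p hp
      simp only [hS, mem_filter, mem_univ, true_and] at hp
      obtain ⟨⟨h1, h2, h3⟩, h4⟩ := hp
      subst h4
      simp only [mem_filter, mem_univ, true_and]
      exact ⟨h2, h3⟩
    · rintro p hp q hq hpq
      simp only [hS, mem_filter, mem_univ, true_and] at hp hq
      exact Prod.ext (hp.2.trans hq.2.symm) hpq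
    · intro B hB
      simp only [mem_filter, mem_univ, true_and] at hB
      refine ⟨(A, B), ?_, rfl⟩
      simp only [hS, mem_filter, mem_univ, true_and]
      exact ⟨⟨hA, hB.1, hB.2⟩, trivial⟩
  rw [Finset.sum_congr rfl hfib, Finset.sum_const, smul_eq_mul]
  congr 1
  have : (univ : Finset (Finset (Fin m))).filter (fun A => A.card = k)
      = (univ : Finset (Fin m)).powersetCard k := by
    ext A
    simp [Finset.mem_powersetCard, Finset.subset_univ]
  rw [this, Finset.card_powersetCard, Finset.card_univ, Fintype.card_fin]

def patEquiv (m : ℕ) : (Fin m → Bool) ≃ Finset (Fin m) where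
  toFun i := Finset.univ.filter (fun x => i x = true)
  invFun A := fun x => decide (x ∈ A)
  left_inv i := by funext x; simp
  right_inv A := by ext x; simp

lemma patWeight_eq_aux (m : ℕ) (i : Fin m → Bool) : patWeight i = (patEquiv m i).card := rfl

lemma hammingDist_eq_aux (m : ℕ) (i i' : Fin m → Bool) :
    hammingDist i i' = (symmDiff (patEquiv m i) (patEquiv m i')).card := by
  rw [hammingDist]
  congr 1
  ext x
  simp only [Finset.mem_filter, Finset.mem_univ, true_and, Finset.mem_symmDiff, patEquiv,
    Equiv.coe_fn_mk]
  cases h1 : i x <;> cases h2 : i' x <;> simp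

/-- Degeneracy collapse of fidelity sums over the k-CPF image space: a sum of any
function of the Hamming distance over distinct weight-k pattern pairs collapses to
a weighted sum over distance classes, Σ_{t=k+1}^{2k} C(m,t)C(t,k)C(k,2k−t) h(2(t−k)). -/
theorem sum_kCPF_pairs_eq_degeneracy_sum (m k : ℕ) (hk : 1 ≤ k) (hkm : k ≤ m)
    (h : ℕ → ℝ) :
    (∑ p ∈ (Finset.univ : Finset ((Fin m → Bool) × (Fin m → Bool))).filter
        (fun p => p.1 ≠ p.2 ∧ patWeight p.1 = k ∧ patWeight p.2 = k),
      h (hammingDist p.1 p.2)) =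
      ∑ t ∈ Finset.Icc (k + 1) (2 * k),
        (Nat.choose m t * Nat.choose t k * Nat.choose k (2 * k - t) : ℝ) *
          h (2 * (t - k)) := by
  -- Step 1: transfer the sum to pairs of finsets
  have step1 :
      (∑ p ∈ (Finset.univ : Finset ((Fin m → Bool) × (Fin m → Bool))).filter
          (fun p => p.1 ≠ p.2 ∧ patWeight p.1 = k ∧ patWeight p.2 = k),
        h (hammingDist p.1 p.2)) =
      ∑ q ∈ (Finset.univ : Finset (Finset (Fin m) × Finset (Fin m))).filter
          (fun q => q.1 ≠ q.2 ∧ q.1.card = k ∧ q.2.card = k),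
        h ((symmDiff q.1 q.2).card) := by
    apply Finset.sum_equiv ((patEquiv m).prodCongr (patEquiv m))
    · intro p
      simp only [mem_filter, mem_univ, true_and, Equiv.prodCongr_apply, Prod.map]
      rw [patWeight_eq_aux, patWeight_eq_aux, (patEquiv m).injective.ne_iff]
    · intro p _
      rw [hammingDist_eq_aux]
      rfl
  rw [step1]
  -- Step 2: sum fiberwise over the union cardinality
  set S := (Finset.univ : Finset (Finset (Fin m) × Finset (Fin m))).filter
      (fun q => q.1 ≠ q.2 ∧ q.1.card = k ∧ q.2.card = k) with hSdef
  have hmaps : ∀ q ∈ S, (q.1 ∪ q.2).card ∈ Finset.Icc (k + 1) (2 * k) := by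
    rintro ⟨A, B⟩ hq
    simp only [hSdef, mem_filter, mem_univ, true_and] at hq
    obtain ⟨hne, hA, hB⟩ := hq
    rw [Finset.mem_Icc]
    dsimp only
    constructor
    · by_contra hcon
      push_neg at hcon
      have hle : (A ∪ B).card ≤ k := by omega
      have hA' : A = A ∪ B :=
        Finset.eq_of_subset_of_card_le Finset.subset_union_left (by omega)
      have hB' : B = A ∪ B :=
        Finset.eq_of_subset_of_card_le Finset.subset_union_right (by omega)
      exact hne (hA'.trans hB'.symm)
    · have := Finset.card_union_le A B
      omega
  rw [← Finset.sum_fiberwise_of_maps_to hmaps]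
  apply Finset.sum_congr rfl
  intro t ht
  rw [Finset.mem_Icc] at ht
  obtain ⟨ht1, ht2⟩ := ht
  -- the fiber equals the simpler filtered set
  have hfibeq : S.filter (fun q => (q.1 ∪ q.2).card = t)
      = (Finset.univ : Finset (Finset (Fin m) × Finset (Fin m))).filter
          (fun p => p.1.card = k ∧ p.2.card = k ∧ (p.1 ∪ p.2).card = t) := by
    ext ⟨A, B⟩
    simp only [hSdef, Finset.filter_filter, mem_filter, mem_univ, true_and]
    constructor
    · rintro ⟨⟨_, hA, hB⟩, hu⟩
      exact ⟨hA, hB, hu⟩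
    · rintro ⟨hA, hB, hu⟩
      refine ⟨⟨?_, hA, hB⟩, hu⟩
      intro hAB
      rw [hAB, Finset.union_self] at hu
      omega
  -- each pair in the fiber has symmetric difference of cardinality 2*(t-k)
  have hsd : ∀ q ∈ S.filter (fun q => (q.1 ∪ q.2).card = t),
      h ((symmDiff q.1 q.2).card) = h (2 * (t - k)) := by
    rintro ⟨A, B⟩ hq
    rw [hfibeq] at hq
    simp only [mem_filter, mem_univ, true_and] at hq
    obtain ⟨hA, hB, hu⟩ := hq
    congr 1
    have h1 : (A ∪ B).card + (A ∩ B).card = A.card + B.card :=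
      Finset.card_union_add_card_inter A B
    have h2 : symmDiff A B = (A ∪ B) \ (A ∩ B) := by
      rw [symmDiff_eq_sup_sdiff_inf]; rfl
    have h3 : A ∩ B ⊆ A ∪ B := Finset.inter_subset_union
    rw [h2, Finset.card_sdiff_of_subset h3]
    omega
  rw [Finset.sum_congr rfl hsd, Finset.sum_const, hfibeq,
    card_fiber_aux m k t ht1 ht2, nsmul_eq_mul]
  congr 1
  rw [show m.choose k * (k.choose (2 * k - t) * (m - k).choose (t - k))
      = m.choose k * (m - k).choose (t - k) * k.choose (2 * k - t) by ring,
    trinom_aux m k t (by omega)]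
  push_cast
  ring
end

section
/- Let k ≥ 1 and m = 2k. Let g : (Bool × Bool) → (Bool × Bool) → ℝ be a function and F01, F12, F11, F02 real numbers such that: g(p, p) = 1 for all p; g((0,0),(0,1)) = g((0,0),(1,0)) = g((0,1),(0,0)) = g((1,0),(0,0)) = F01; g((0,1),(1,1)) = g((1,0),(1,1)) = g((1,1),(0,1)) = g((1,1),(1,0)) = F12; g((0,1),(1,0)) = g((1,0),(0,1)) = F11; and g((0,0),(1,1)) = g((1,1),(0,0)) = F02. Then (1/2^m) · Σ over all ordered pairs (i, i') of DISTINCT binary patterns on Fin m of Π_{j=0}^{k−1} g((i(2j), i(2j+1)), (i'(2j), i'(2j+1))) equals (1 + F01 + F12 + (F11 + F02)/2)^k − 1. -/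
def pairEquiv (k : ℕ) : (Fin (2 * k) → Bool) ≃ (Fin k → Bool × Bool) where
  toFun f j := (f ⟨2 * (j : ℕ), by have := j.isLt; omega⟩,
                f ⟨2 * (j : ℕ) + 1, by have := j.isLt; omega⟩)
  invFun u i :=
    if (i : ℕ) % 2 = 0 then (u ⟨(i : ℕ) / 2, by have := i.isLt; omega⟩).1
    else (u ⟨(i : ℕ) / 2, by have := i.isLt; omega⟩).2
  left_inv f := by
    funext i
    by_cases h : (i : ℕ) % 2 = 0 <;> simp only [h, if_true, if_false, reduceIte] <;>
      · congr 1
        exact Fin.ext (by simp only [Fin.val_mk]; omega)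
  right_inv u := by
    funext j
    have h1 : (2 * (j : ℕ)) % 2 = 0 := by omega
    have h2 : (2 * (j : ℕ) + 1) % 2 = 1 := by omega
    simp only [h1, h2, reduceIte]
    have e1 : (⟨2 * (j : ℕ) / 2, by have := j.isLt; omega⟩ : Fin k) = j := Fin.ext (by simp only [Fin.val_mk]; omega)
    have e2 : (⟨(2 * (j : ℕ) + 1) / 2, by have := j.isLt; omega⟩ : Fin k) = j := Fin.ext (by simp only [Fin.val_mk]; omega)
    rw [e1, e2]
    simp

/-- The paper's identity D₂: when an even pattern (m = 2k channels) is probed by k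
disjointly distributed two-mode probes whose sub-fidelities take the four degenerate
values F01, F12, F11, F02, the normalized fidelity sum over distinct pattern pairs
equals (1 + F01 + F12 + (F11 + F02)/2)^k − 1. -/
theorem tmsv_disjoint_uniform_fidelity_sum (k m : ℕ) (hk : 1 ≤ k) (hm : m = 2 * k)
    (g : (Bool × Bool) → (Bool × Bool) → ℝ) (F01 F12 F11 F02 : ℝ)
    (hgdiag : ∀ p, g p p = 1)
    (h01a : g (false, false) (false, true) = F01)
    (h01b : g (false, false) (true, false) = F01)
    (h01c : g (false, true) (false, false) = F01)
    (h01d : g (true, false) (false, false) = F01)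
    (h12a : g (false, true) (true, true) = F12)
    (h12b : g (true, false) (true, true) = F12)
    (h12c : g (true, true) (false, true) = F12)
    (h12d : g (true, true) (true, false) = F12)
    (h11a : g (false, true) (true, false) = F11)
    (h11b : g (true, false) (false, true) = F11)
    (h02a : g (false, false) (true, true) = F02)
    (h02b : g (true, true) (false, false) = F02) :
    (1 / (2 : ℝ) ^ m) *
      (∑ p ∈ (Finset.univ : Finset ((Fin m → Bool) × (Fin m → Bool))).filter
          (fun p => p.1 ≠ p.2),
        ∏ j : Fin k,
          g (p.1 ⟨2 * (j : ℕ), by have := j.isLt; omega⟩,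
              p.1 ⟨2 * (j : ℕ) + 1, by have := j.isLt; omega⟩)
            (p.2 ⟨2 * (j : ℕ), by have := j.isLt; omega⟩,
              p.2 ⟨2 * (j : ℕ) + 1, by have := j.isLt; omega⟩)) =
      (1 + F01 + F12 + (F11 + F02) / 2) ^ k - 1 := by
  subst hm
  set D : ℝ := 1 + F01 + F12 + (F11 + F02) / 2 with hD
  set F : (Fin (2 * k) → Bool) × (Fin (2 * k) → Bool) → ℝ := fun p =>
    ∏ j : Fin k,
      g (p.1 ⟨2 * (j : ℕ), by have := j.isLt; omega⟩,
          p.1 ⟨2 * (j : ℕ) + 1, by have := j.isLt; omega⟩)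
        (p.2 ⟨2 * (j : ℕ), by have := j.isLt; omega⟩,
          p.2 ⟨2 * (j : ℕ) + 1, by have := j.isLt; omega⟩) with hF
  -- total sum
  have htot : ∑ p : (Fin (2 * k) → Bool) × (Fin (2 * k) → Bool), F p = (4 * D) ^ k := by
    have key : ∑ z : (Bool × Bool) × (Bool × Bool), g z.1 z.2 = 4 * D := by
      simp only [Fintype.sum_prod_type, Fintype.sum_bool, Prod.mk.injEq]
      rw [hgdiag, hgdiag, hgdiag, hgdiag, h01a, h01b, h01c, h01d, h12a, h12b, h12c, h12d,
        h11a, h11b, h02a, h02b]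
      ring
    rw [← key]
    have step1 : (∑ z : (Bool × Bool) × (Bool × Bool), g z.1 z.2) ^ k
        = ∑ w : Fin k → (Bool × Bool) × (Bool × Bool), ∏ j : Fin k, g (w j).1 (w j).2 := by
      rw [← Fin.prod_const k (∑ z : (Bool × Bool) × (Bool × Bool), g z.1 z.2)]
      rw [Finset.prod_univ_sum]
      rw [Fintype.piFinset_univ]
    rw [step1]
    -- reindex: pairs of patterns ≃ (Fin k → (B×B))
    let E : ((Fin (2 * k) → Bool) × (Fin (2 * k) → Bool)) ≃ (Fin k → (Bool × Bool) × (Bool × Bool)) :=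
      ((pairEquiv k).prodCongr (pairEquiv k)).trans (Equiv.arrowProdEquivProdArrow _ _ _).symm
    rw [← Equiv.sum_comp E (fun w => ∏ j : Fin k, g (w j).1 (w j).2)]
    apply Finset.sum_congr rfl
    intro p _
    apply Finset.prod_congr rfl
    intro j _
    rfl
  -- diagonal sum
  have hdiag : ∑ p ∈ (Finset.univ : Finset ((Fin (2*k) → Bool) × (Fin (2*k) → Bool))).filter
      (fun p => ¬ p.1 ≠ p.2), F p = (2 : ℝ) ^ (2 * k) := by
    rw [Finset.sum_filter]
    rw [Fintype.sum_prod_type]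
    have : ∀ i : Fin (2*k) → Bool, ∑ i' : Fin (2*k) → Bool,
        (if ¬ i ≠ i' then F (i, i') else 0) = 1 := by
      intro i
      rw [Finset.sum_eq_single i]
      · simp only [ne_eq, not_not, not_true, if_true, reduceIte]
        simp only [hF]
        rw [Finset.prod_congr rfl (fun j _ => hgdiag _)]
        simp
      · intro b _ hb
        simp [Ne.symm hb]
      · simp
    rw [Finset.sum_congr rfl (fun i _ => this i)]
    simp
  have hsplit := Finset.sum_filter_add_sum_filter_not
    (Finset.univ : Finset ((Fin (2*k) → Bool) × (Fin (2*k) → Bool))) (fun p => p.1 ≠ p.2) F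
  have hne : ∑ p ∈ (Finset.univ : Finset ((Fin (2*k) → Bool) × (Fin (2*k) → Bool))).filter
      (fun p => p.1 ≠ p.2), F p = (4 * D) ^ k - (2:ℝ) ^ (2*k) := by
    have := hsplit
    rw [hdiag] at this
    linarith [htot]
  rw [hne]
  have h4 : (2 : ℝ) ^ (2 * k) = 4 ^ k := by
    rw [pow_mul]; norm_num
  rw [h4, mul_pow]
  have : (4 : ℝ) ^ k ≠ 0 := by positivity
  field_simp
end

section
/- Let η_B, η_T be reals with 0 < η_B < 1 and 0 < η_T < 1, and set s = η_B + η_T and κ₁ = η_B η_T (1 − η_T)(1 − η_B) > 0. For N ≥ 0 define κ₂(N) = 1 + N(2 − s)s + 4N²κ₁ and F₀₂(N) = ( 2N√κ₁ + √(κ₂(N)) ) / ( 1 + N(2 − s)s ). Then F₀₂(N) tends to 4√( κ₁ / ((s − 2)² s²) ) = 4√κ₁ / ((2 − s)s) as N → ∞. -/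
/-- The unassisted TMSV sub-fidelity F₀₂ for pure-loss channel patterns [0,0] vs
[1,1]: with s = η_B + η_T and κ₁ = η_Bη_T(1−η_T)(1−η_B) > 0, the fidelity
F₀₂(N) = (2N√κ₁ + √(κ₂(N)))/(1 + N(2−s)s) with κ₂(N) = 1 + N(2−s)s + 4N²κ₁
tends to 4√(κ₁/((s−2)²s²)) = 4√κ₁/((2−s)s) as the signal energy N → ∞. -/
theorem F02_pure_loss_tendsto (ηB ηT : ℝ)
    (hB0 : 0 < ηB) (hB1 : ηB < 1) (hT0 : 0 < ηT) (hT1 : ηT < 1)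
    (s κ₁ : ℝ) (hs : s = ηB + ηT) (hκ₁ : κ₁ = ηB * ηT * (1 - ηT) * (1 - ηB))
    (κ₂ : ℝ → ℝ) (hκ₂ : ∀ N, κ₂ N = 1 + N * (2 - s) * s + 4 * N ^ 2 * κ₁) :
    0 < κ₁ ∧
      Filter.Tendsto
        (fun N : ℝ =>
          (2 * N * Real.sqrt κ₁ + Real.sqrt (κ₂ N)) / (1 + N * (2 - s) * s))
        Filter.atTop (nhds (4 * Real.sqrt (κ₁ / ((s - 2) ^ 2 * s ^ 2)))) ∧
      4 * Real.sqrt (κ₁ / ((s - 2) ^ 2 * s ^ 2)) =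
        4 * Real.sqrt κ₁ / ((2 - s) * s) := by
  have hκ₁pos : 0 < κ₁ := by
    rw [hκ₁]
    have h1 : 0 < 1 - ηT := by linarith
    have h2 : 0 < 1 - ηB := by linarith
    positivity
  have hs2 : 0 < 2 - s := by rw [hs]; linarith
  have hspos : 0 < s := by rw [hs]; linarith
  have hden : 0 < (2 - s) * s := mul_pos hs2 hspos
  -- the key equality between the two closed forms
  have hval : 4 * Real.sqrt (κ₁ / ((s - 2) ^ 2 * s ^ 2)) =
      4 * Real.sqrt κ₁ / ((2 - s) * s) := by
    rw [Real.sqrt_div hκ₁pos.le]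
    have : Real.sqrt ((s - 2) ^ 2 * s ^ 2) = (2 - s) * s := by
      rw [show (s - 2) ^ 2 * s ^ 2 = ((2 - s) * s) ^ 2 by ring,
        Real.sqrt_sq hden.le]
    rw [this]; ring
  refine ⟨hκ₁pos, ?_, hval⟩
  rw [hval]
  -- auxiliary function
  set g : ℝ → ℝ := fun N =>
    (2 * Real.sqrt κ₁ + Real.sqrt (1 / N ^ 2 + (2 - s) * s * (1 / N) + 4 * κ₁)) /
      (1 / N + (2 - s) * s) with hg
  have hglim : Filter.Tendsto g Filter.atTop (nhds (4 * Real.sqrt κ₁ / ((2 - s) * s))) := by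
    have h1 : Filter.Tendsto (fun N : ℝ => 1 / N ^ 2 + (2 - s) * s * (1 / N) + 4 * κ₁)
        Filter.atTop (nhds (0 + (2 - s) * s * 0 + 4 * κ₁)) := by
      refine Filter.Tendsto.add (Filter.Tendsto.add ?_ ?_) tendsto_const_nhds
      · have h0 : Filter.Tendsto (fun N : ℝ => 1 / N) Filter.atTop (nhds 0) :=
          tendsto_inv_atTop_zero.congr (by simp)
        have := h0.mul h0
        simp only [mul_zero] at this
        refine this.congr (fun N => ?_)
        ring
      · exact (tendsto_const_nhds.mul (tendsto_inv_atTop_zero.congr (by simp)))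
    have h2 : Filter.Tendsto (fun N : ℝ =>
        Real.sqrt (1 / N ^ 2 + (2 - s) * s * (1 / N) + 4 * κ₁))
        Filter.atTop (nhds (Real.sqrt (4 * κ₁))) := by
      have := (Real.continuous_sqrt.tendsto (0 + (2 - s) * s * 0 + 4 * κ₁)).comp h1
      simpa [Function.comp_def] using this
    have h3 : Real.sqrt (4 * κ₁) = 2 * Real.sqrt κ₁ := by
      rw [show (4 : ℝ) = 2 ^ 2 by norm_num, Real.sqrt_mul (by positivity),
        Real.sqrt_sq (by norm_num : (0:ℝ) ≤ 2)]
    have h4 : Filter.Tendsto (fun N : ℝ => 1 / N + (2 - s) * s)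
        Filter.atTop (nhds (0 + (2 - s) * s)) := by
      exact Filter.Tendsto.add (tendsto_inv_atTop_zero.congr (by simp)) tendsto_const_nhds
    have := Filter.Tendsto.div ((tendsto_const_nhds (x := 2 * Real.sqrt κ₁)).add h2) h4
      (by simpa using hden.ne')
    simp only [zero_add] at this
    convert this using 2
    · funext x; rfl
    · rw [h3]; ring
  refine hglim.congr' ?_
  filter_upwards [Filter.eventually_gt_atTop (0 : ℝ)] with N hN
  have hNne : N ≠ 0 := hN.ne'
  have hκ₂eq : κ₂ N = N ^ 2 * (1 / N ^ 2 + (2 - s) * s * (1 / N) + 4 * κ₁) := by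
    rw [hκ₂]; field_simp
  have hsq : Real.sqrt (κ₂ N) =
      N * Real.sqrt (1 / N ^ 2 + (2 - s) * s * (1 / N) + 4 * κ₁) := by
    rw [hκ₂eq, show N ^ 2 = N * N by ring, Real.sqrt_mul (by positivity : (0:ℝ) ≤ N * N), Real.sqrt_mul_self hN.le]
  rw [hg]
  simp only
  have hp1 : 0 < 1 / N + (2 - s) * s := add_pos (one_div_pos.mpr hN) hden
  have hp2 : 0 < 1 + N * (2 - s) * s := by nlinarith
  rw [div_eq_div_iff hp1.ne' hp2.ne']
  rw [hsq]
  field_simp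
end
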